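/- Let q and r be compositions of n that are rearrangements of each other. Then the number of ℓ(r)×ℓ(q) matrices with nonnegative integer entries, with row sums equal to the parts of r, column sums equal to the parts of q, exactly one nonzero entry per column, and such that reading the nonzero entries row by row recovers the composition r, equals ∏_i m_i(r)!, where m_i(r) is the number of parts of r equal to i. -/

import Mathlib

/-- The set `N^s_{r,q}` of matrices with row sums `r`, column sums `q`, and
row-reading (after deleting zeros) equal to `s`. -/
def NSet {n : ℕ} (s r q : Composition n) : Set (Fin r.length → Fin q.length → ℕ) :=
  {A | (∀ i, ∑ j, A i j = r.blocksFun i) ∧ (∀ j, ∑ i, A i j = q.blocksFun j) ∧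
    ((List.ofFn (fun i => List.ofFn (fun j => A i j))).flatten.filter
      (fun x => decide (x ≠ 0))) = s.blocks}

/-- The subset `overline{N}^s_{r,q}` of matrices with exactly one nonzero entry per
column. -/
def NBarSet {n : ℕ} (s r q : Composition n) : Set (Fin r.length → Fin q.length → ℕ) :=
  {A | A ∈ NSet s r q ∧ ∀ j, ∃! i, A i j ≠ 0}

section Helpers

lemma chunk_aux : ∀ (ls : List (List ℕ)), (∀ x ∈ ls.flatten, 0 < x) →
    ls.map List.sum = ls.flatten → ls = ls.flatten.map (fun x => [x])
  | [], _, _ => rfl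
  | l :: ls, hpos, hsum => by
    match l with
    | [] =>
      exfalso
      simp only [List.flatten_cons, List.nil_append, List.map_cons, List.sum_nil] at hsum hpos
      have : (0 : ℕ) ∈ ls.flatten := by rw [← hsum]; exact List.mem_cons_self
      exact absurd (hpos 0 this) (by simp)
    | x :: t =>
      simp only [List.flatten_cons, List.map_cons, List.sum_cons, List.cons_append,
        List.cons.injEq] at hsum
      obtain ⟨h1, h2⟩ := hsum
      have ht : t = [] := by
        have hsum0 : t.sum = 0 := by omega
        rcases t with _ | ⟨y, t'⟩
        · rfl
        · exfalso
          have : 0 < y := hpos y (by simp)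
          simp only [List.sum_cons] at hsum0; omega
      subst ht
      simp only [List.nil_append] at h2
      have ih := chunk_aux ls (fun z hz => hpos z (by simp [hz])) h2
      simp only [List.flatten_cons, List.singleton_append, List.map_cons]
      rw [← ih]

lemma sum_filter_ne_zero' (l : List ℕ) :
    (l.filter (fun x => decide (x ≠ 0))).sum = l.sum := by
  induction l with
  | nil => rfl
  | cons x l ih =>
    simp only [ne_eq, decide_not] at ih ⊢
    rw [List.filter_cons]
    by_cases hx : x = 0
    · simp [hx, ih]
    · simp [hx, ih]

lemma filter_flatten' (ls : List (List ℕ)) (p : ℕ → Bool) :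
    ls.flatten.filter p = (ls.map (List.filter p)).flatten := by
  induction ls with
  | nil => rfl
  | cons l ls ih => simp [List.filter_append, ih]

lemma flatten_ofFn_singleton {k : ℕ} (g : Fin k → ℕ) :
    (List.ofFn (fun i => [g i])).flatten = List.ofFn g := by
  induction k with
  | zero => rfl
  | succ m ih => simp [List.ofFn_succ, ih]

lemma filter_ofFn_eq_singleton {k : ℕ} (f : Fin k → ℕ) (j₀ : Fin k)
    (h : ∀ j, f j ≠ 0 ↔ j = j₀) :
    (List.ofFn f).filter (fun x => decide (x ≠ 0)) = [f j₀] := by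
  rw [List.ofFn_eq_map, List.filter_map]
  have h2 : (List.finRange k).filter ((fun x => decide (x ≠ 0)) ∘ f) = [j₀] := by
    have : (List.finRange k).filter ((fun x => decide (x ≠ 0)) ∘ f)
        = (List.finRange k).filter (· == j₀) := by
      apply List.filter_congr
      intro a _
      rw [Bool.eq_iff_iff]
      simp [Function.comp, h a]
    rw [this, List.filter_beq, List.count_eq_one_of_mem (List.nodup_finRange k)
      (List.mem_finRange j₀), List.replicate_one]
  rw [h2, List.map_singleton]

lemma filter_ofFn_singleton_iff {k : ℕ} (f : Fin k → ℕ) (y : ℕ)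
    (h : (List.ofFn f).filter (fun x => decide (x ≠ 0)) = [y]) :
    ∃ j₀, (∀ j, f j ≠ 0 ↔ j = j₀) ∧ f j₀ = y := by
  rw [List.ofFn_eq_map, List.filter_map] at h
  set L := (List.finRange k).filter ((fun x => decide (x ≠ 0)) ∘ f) with hL
  have hlen : L.length = 1 := by
    have := congrArg List.length h
    simpa using this
  obtain ⟨j₀, hj₀⟩ := List.length_eq_one_iff.mp hlen
  refine ⟨j₀, fun j => ?_, ?_⟩
  · have hmem : j ∈ L ↔ f j ≠ 0 := by
      rw [hL, List.mem_filter]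
      simp [List.mem_finRange]
    rw [← hmem, hj₀, List.mem_singleton]
  · rw [hj₀] at h
    simpa using h

lemma count_fiber {k : ℕ} (f : Fin k → ℕ) (v : ℕ) :
    Fintype.card {i : Fin k // f i = v} = (List.ofFn f).count v := by
  rw [List.count_eq_countP, Fintype.card_subtype]
  rw [List.ofFn_eq_map, List.countP_map, List.countP_eq_length_filter]
  rw [← List.toFinset_card_of_nodup ((List.nodup_finRange k).filter _)]
  congr 1
  ext i
  simp only [Finset.mem_filter, List.mem_toFinset, List.mem_filter, List.mem_finRange,
    Finset.mem_univ, true_and, Function.comp_apply, decide_eq_true_eq, beq_iff_eq]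

/-- Equivalences preserving a labelling decompose into fiberwise equivalences. -/
def fiberEquiv {α β γ : Type*} (f : α → γ) (g : β → γ) :
    {σ : α ≃ β // ∀ a, g (σ a) = f a} ≃ (∀ c : γ, {a // f a = c} ≃ {b // g b = c}) where
  toFun σ c :=
    { toFun := fun a => ⟨σ.1 a.1, by rw [σ.2]; exact a.2⟩
      invFun := fun b => ⟨σ.1.symm b.1, by
        have := σ.2 (σ.1.symm b.1); rw [Equiv.apply_symm_apply] at this; rw [← this]; exact b.2⟩
      left_inv := fun a => by ext; simp
      right_inv := fun b => by ext; simp }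
  invFun e :=
    ⟨(Equiv.sigmaFiberEquiv f).symm.trans ((Equiv.sigmaCongrRight e).trans
      (Equiv.sigmaFiberEquiv g)), fun a => by
      simp [Equiv.sigmaFiberEquiv, Equiv.sigmaCongrRight]
      exact (e (f a) ⟨a, rfl⟩).2⟩
  left_inv := fun ⟨σ, hσ⟩ => by
    ext a
    simp [Equiv.sigmaFiberEquiv, Equiv.sigmaCongrRight]
  right_inv := fun e => by
    funext c
    ext ⟨a, ha⟩
    subst ha
    simp [Equiv.sigmaFiberEquiv, Equiv.sigmaCongrRight]

end Helpers

section Main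

variable {n : ℕ} (q r : Composition n)

/-- The matrix associated to a value-preserving bijection. -/
def matOf (σ : Fin q.length ≃ Fin r.length) : Fin r.length → Fin q.length → ℕ :=
  fun i j => if σ j = i then q.blocksFun j else 0

lemma blocksFun_ne_zero (j : Fin q.length) : q.blocksFun j ≠ 0 :=
  Nat.one_le_iff_ne_zero.mp (q.one_le_blocksFun j)

lemma matOf_ne_zero_iff (σ : Fin q.length ≃ Fin r.length) (i : Fin r.length)
    (j : Fin q.length) : matOf q r σ i j ≠ 0 ↔ σ j = i := by
  simp only [matOf]
  by_cases h : σ j = i <;> simp [h, blocksFun_ne_zero q j]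

lemma rows_eq (A : Fin r.length → Fin q.length → ℕ) (hA : A ∈ NBarSet r r q) (i : Fin r.length) :
    (List.ofFn (A i)).filter (fun x => decide (x ≠ 0)) = [r.blocksFun i] := by
  obtain ⟨⟨hrow, _hcol, hread⟩, _⟩ := hA
  set ls : List (List ℕ) :=
    List.ofFn (fun i => (List.ofFn (A i)).filter (fun x => decide (x ≠ 0))) with hls
  have hflat : ls.flatten = r.blocks := by
    rw [← hread, filter_flatten', List.map_ofFn]
    rfl
  have hpos : ∀ x ∈ ls.flatten, 0 < x := by
    rw [hflat]; exact fun x hx => r.blocks_pos hx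
  have hmap : ls.map List.sum = ls.flatten := by
    rw [hflat, hls, List.map_ofFn, ← Composition.ofFn_blocksFun]
    congr 1
    funext i'
    simp only [Function.comp]
    rw [sum_filter_ne_zero', List.sum_ofFn, hrow i']
  have := chunk_aux ls hpos hmap
  rw [hflat, ← Composition.ofFn_blocksFun, List.map_ofFn, hls] at this
  have := List.ofFn_injective this
  exact congrFun this i

lemma matOf_mem (σ : Fin q.length ≃ Fin r.length)
    (hσ : ∀ j, r.blocksFun (σ j) = q.blocksFun j) : matOf q r σ ∈ NBarSet r r q := by
  have hentry := matOf_ne_zero_iff q r σ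
  refine ⟨⟨?_, ?_, ?_⟩, ?_⟩
  · intro i
    rw [Finset.sum_eq_single (σ.symm i)]
    · have : matOf q r σ i (σ.symm i) = q.blocksFun (σ.symm i) := by
        simp [matOf]
      rw [this, ← hσ (σ.symm i), Equiv.apply_symm_apply]
    · intro j _ hj
      have hne : σ j ≠ i := fun h => hj (by rw [← h, Equiv.symm_apply_apply])
      simp [matOf, hne]
    · simp
  · intro j
    simp only [matOf]
    rw [Finset.sum_ite_eq]
    simp
  · have hrowfilter : ∀ i, (List.ofFn (matOf q r σ i)).filter (fun x => decide (x ≠ 0))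
        = [r.blocksFun i] := by
      intro i
      have hiff : ∀ j, matOf q r σ i j ≠ 0 ↔ j = σ.symm i := fun j =>
        (hentry i j).trans σ.apply_eq_iff_eq_symm_apply
      rw [filter_ofFn_eq_singleton (matOf q r σ i) (σ.symm i) hiff]
      have : matOf q r σ i (σ.symm i) = q.blocksFun (σ.symm i) := by simp [matOf]
      rw [this, ← hσ (σ.symm i), Equiv.apply_symm_apply]
    rw [filter_flatten', List.map_ofFn]
    have : (List.filter (fun x => decide (x ≠ 0)) ∘ fun i => List.ofFn (matOf q r σ i))
        = fun i => [r.blocksFun i] := by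
      funext i; exact hrowfilter i
    rw [this, flatten_ofFn_singleton, Composition.ofFn_blocksFun]
  · intro j
    exact ⟨σ j, (hentry (σ j) j).mpr rfl, fun i hi => ((hentry i j).mp hi).symm⟩

lemma matOf_bijective :
    Function.Bijective (fun σ : {σ : Fin q.length ≃ Fin r.length //
        ∀ j, r.blocksFun (σ j) = q.blocksFun j} =>
      (⟨matOf q r σ.1, matOf_mem q r σ.1 σ.2⟩ : NBarSet r r q)) := by
  constructor
  · rintro ⟨σ, hσ⟩ ⟨τ, hτ⟩ h
    simp only [Subtype.mk.injEq] at h ⊢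
    ext j
    have h1 : matOf q r σ (σ j) j ≠ 0 := (matOf_ne_zero_iff q r σ (σ j) j).mpr rfl
    rw [h] at h1
    exact congrArg Fin.val ((matOf_ne_zero_iff q r τ (σ j) j).mp h1).symm
  · rintro ⟨A, hA⟩
    have rows := rows_eq q r A hA
    choose j₀ hj₀ hv using fun i => filter_ofFn_singleton_iff (A i) _ (rows i)
    choose g hg1 hg2 using hA.2
    have hleft : ∀ j, j₀ (g j) = j := fun j => ((hj₀ (g j) j).mp (hg1 j)).symm
    have hright : ∀ i, g (j₀ i) = i := by
      intro i
      have : A i (j₀ i) ≠ 0 := by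
        rw [hv i]
        exact Nat.one_le_iff_ne_zero.mp (r.one_le_blocksFun i)
      exact (hg2 (j₀ i) i this).symm
    set σ : Fin q.length ≃ Fin r.length := ⟨g, j₀, hleft, hright⟩ with hσdef
    have hAgj : ∀ j, A (g j) j = q.blocksFun j := by
      intro j
      rw [← hA.1.2.1 j, Finset.sum_eq_single (g j)]
      · intro i _ hi
        by_contra hne
        exact hi (hg2 j i hne)
      · simp
    have hprop : ∀ j, r.blocksFun (σ j) = q.blocksFun j := by
      intro j
      rw [← hAgj j]
      have : A (g j) j = A (g j) (j₀ (g j)) := by rw [hleft j]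
      rw [this, hv (g j)]
      rfl
    refine ⟨⟨σ, hprop⟩, ?_⟩
    apply Subtype.ext
    funext i j
    show matOf q r σ i j = A i j
    by_cases hgj : g j = i
    · subst hgj
      simp only [matOf, hσdef, Equiv.coe_fn_mk, if_pos rfl]
      exact (hAgj j).symm
    · have hzero : A i j = 0 := by
        by_contra hne
        exact hgj (hg2 j i hne).symm
      simp only [matOf, hσdef, Equiv.coe_fn_mk, if_neg hgj, hzero]

end Main

/-- If `q ≈ r` (the compositions are rearrangements of each other),
then `|overline{N}^r_{r,q}| = ∏_i m_i(r)!`. -/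
theorem card_NBar_eq (n : ℕ) (q r : Composition n) (hqr : q.blocks.Perm r.blocks) :
    Nat.card (NBarSet r r q) =
      ∏ i ∈ Finset.range (n + 1), (r.blocks.count i).factorial := by
  classical
  -- Step 1: transfer to value-preserving bijections
  rw [← Nat.card_eq_of_bijective _ (matOf_bijective q r)]
  -- Step 2: reindex the labelling through `Fin (n+1)`
  have hqlt : ∀ j, q.blocksFun j < n + 1 := fun j => Nat.lt_succ_of_le (q.blocksFun_le j)
  have hrlt : ∀ i, r.blocksFun i < n + 1 := fun i => Nat.lt_succ_of_le (r.blocksFun_le i)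
  set f : Fin q.length → Fin (n+1) := fun j => ⟨q.blocksFun j, hqlt j⟩ with hf
  set g : Fin r.length → Fin (n+1) := fun i => ⟨r.blocksFun i, hrlt i⟩ with hg
  have e1 : {σ : Fin q.length ≃ Fin r.length // ∀ j, r.blocksFun (σ j) = q.blocksFun j}
      ≃ {σ : Fin q.length ≃ Fin r.length // ∀ j, g (σ j) = f j} :=
    Equiv.subtypeEquivRight (fun σ => by
      constructor
      · intro h j; exact Fin.ext (h j)
      · intro h j; exact congrArg Fin.val (h j))
  rw [Nat.card_congr (e1.trans (fiberEquiv f g)), Nat.card_pi]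
  have hcount : ∀ v : Fin (n+1),
      Nat.card ({j // f j = v} ≃ {i // g i = v}) = (r.blocks.count v.val).factorial := by
    intro v
    have hcf : Fintype.card {j // f j = v} = q.blocks.count v.val := by
      rw [← Composition.ofFn_blocksFun, ← count_fiber]
      exact Fintype.card_congr (Equiv.subtypeEquivRight (fun j => by
        simp [hf, Fin.ext_iff]))
    have hcg : Fintype.card {i // g i = v} = r.blocks.count v.val := by
      rw [← Composition.ofFn_blocksFun, ← count_fiber]
      exact Fintype.card_congr (Equiv.subtypeEquivRight (fun i => by
        simp [hg, Fin.ext_iff]))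
    have hcards : Fintype.card {j // f j = v} = Fintype.card {i // g i = v} := by
      rw [hcf, hcg, hqr.count_eq]
    rw [Nat.card_eq_fintype_card, Fintype.card_equiv (Fintype.equivOfCardEq hcards),
      hcf, hqr.count_eq]
  calc ∏ v : Fin (n+1), Nat.card ({j // f j = v} ≃ {i // g i = v})
      = ∏ v : Fin (n+1), (r.blocks.count v.val).factorial := by
        exact Finset.prod_congr rfl (fun v _ => hcount v)
    _ = ∏ i ∈ Finset.range (n + 1), (r.blocks.count i).factorial := by
        rw [Fin.prod_univ_eq_prod_range (fun i => (r.blocks.count i).factorial)]
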